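/- Let ω = s/q with s, q coprime polynomials, all roots of q on the unit circle, and ω(T) ⊂ ℝ. Let k_{±,1} denote the number of roots of s ± i q strictly inside the unit circle (with multiplicity), k_{±,2} the number strictly outside, and l_± = deg(q) − deg(s ± i q). Then k_{+,1} = l_− + k_{−,2} and k_{−,1} = l_+ + k_{+,2}. Consequently, k_{+,1} = k_{−,1} if and only if k_{+,1} = l_+ + k_{+,2}, and if k_{+,1} = k_{−,1} then deg(q) is even. -/

import Mathlib

open Polynomial

private lemma circle_infinite' : {z : ℂ | ‖z‖ = 1}.Infinite := by
  apply Set.infinite_of_injective_forall_mem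
    (f := fun n : ℕ => Complex.exp (((n : ℝ) + 1)⁻¹ * Complex.I))
    ?_ (fun n => by simp [Complex.norm_exp])
  intro a b hab
  simp only [Complex.exp_eq_exp_iff_exists_int] at hab
  obtain ⟨k, hk⟩ := hab
  have h2c : ((((a:ℝ) + 1)⁻¹ : ℝ) : ℂ) = ((((b:ℝ)+1)⁻¹ : ℝ) : ℂ) + (k : ℂ) * (2 * (Real.pi : ℂ)) := by
    apply mul_right_cancel₀ Complex.I_ne_zero
    rw [hk]; ring
  have h2 : (((a:ℝ) + 1)⁻¹ : ℝ) = (((b:ℝ)+1)⁻¹ : ℝ) + (k : ℝ) * (2 * Real.pi) := by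
    exact_mod_cast h2c
  have hpi := Real.pi_gt_three
  have ha : (0:ℝ) < ((a:ℝ)+1)⁻¹ := by positivity
  have hb : (0:ℝ) < ((b:ℝ)+1)⁻¹ := by positivity
  have ha1 : ((a:ℝ)+1)⁻¹ ≤ 1 := by
    rw [inv_le_one_iff₀]; right; linarith [Nat.cast_nonneg (α := ℝ) a]
  have hb1 : ((b:ℝ)+1)⁻¹ ≤ 1 := by
    rw [inv_le_one_iff₀]; right; linarith [Nat.cast_nonneg (α := ℝ) b]
  have hk0 : k = 0 := by
    rcases lt_trichotomy k 0 with h | h | h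
    · have : (k:ℝ) ≤ -1 := by exact_mod_cast Int.le_of_lt_add_one (by simpa using h)
      nlinarith
    · exact h
    · have : (1:ℝ) ≤ (k:ℝ) := by exact_mod_cast h
      nlinarith
  rw [hk0] at h2
  simp only [Int.cast_zero, zero_mul, add_zero] at h2
  have : ((a:ℝ)+1) = ((b:ℝ)+1) := by
    have := inv_injective h2; linarith [this]
  exact_mod_cast (by linarith [this] : (a:ℝ) = b)

private lemma poly_eq_of_circle' (f g : Polynomial ℂ)
    (h : ∀ z : ℂ, ‖z‖ = 1 → f.eval z = g.eval z) : f = g := by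
  rw [← sub_eq_zero]
  apply Polynomial.eq_zero_of_infinite_isRoot
  apply circle_infinite'.mono
  intro z hz
  simp only [Set.mem_setOf_eq, IsRoot, eval_sub, sub_eq_zero] at *
  exact h z hz

private lemma reflect_eq_reverse_mul' (p : Polynomial ℂ) {N : ℕ} (hN : p.natDegree ≤ N) :
    reflect N p = reverse p * X ^ (N - p.natDegree) := by
  ext i
  rw [coeff_reflect, coeff_mul_X_pow', coeff_reverse]
  by_cases hi : N - p.natDegree ≤ i
  · rw [if_pos hi]
    by_cases hiN : i ≤ N
    · rw [revAt_le hiN, revAt_le (by omega)]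
      congr 1; omega
    · rw [revAt_eq_self_of_lt (by omega), revAt_eq_self_of_lt (by omega),
        coeff_eq_zero_of_natDegree_lt (by omega), coeff_eq_zero_of_natDegree_lt (by omega)]
  · rw [if_neg hi, revAt_le (by omega), coeff_eq_zero_of_natDegree_lt (by omega)]

private lemma eval_reflect' (p : Polynomial ℂ) {N : ℕ} (hN : p.natDegree ≤ N) {z : ℂ}
    (hz : z ≠ 0) : (reflect N p).eval z = z ^ N * p.eval z⁻¹ := by
  have hzi : z⁻¹ ≠ 0 := inv_ne_zero hz
  letI : Invertible z⁻¹ := invertibleOfNonzero hzi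
  have h0 := eval₂_reflect_mul_pow (RingHom.id ℂ) z⁻¹ N p hN
  rw [invOf_eq_inv, inv_inv] at h0
  have h1 : (reflect N p).eval z * (z⁻¹) ^ N = p.eval z⁻¹ := h0
  have hzn : (z : ℂ) ^ N ≠ 0 := pow_ne_zero _ hz
  field_simp at h1
  rw [one_div] at h1
  rw [← h1, inv_pow, mul_comm, mul_assoc, inv_mul_cancel₀ hzn, mul_one]

private lemma roots_prod_one_sub' (m : Multiset ℂ) (hm : (0:ℂ) ∉ m) :
    ((m.map (fun r => 1 - C r * X)).prod).roots = m.map (·⁻¹) := by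
  induction m using Multiset.induction_on with
  | empty => simp
  | cons a t ih =>
    have ha : a ≠ 0 := fun h => hm (h ▸ Multiset.mem_cons_self a t)
    have ht : (0:ℂ) ∉ t := fun h => hm (Multiset.mem_cons_of_mem h)
    have hfa : (1 - C a * X : Polynomial ℂ) ≠ 0 := fun h => by
      have := congrArg (fun p => Polynomial.coeff p 0) h
      simp at this
    have hft : ((t.map (fun r => 1 - C r * X)).prod : Polynomial ℂ) ≠ 0 := by
      apply Multiset.prod_ne_zero
      intro h
      rw [Multiset.mem_map] at h
      obtain ⟨r, _, hr⟩ := h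
      exact (fun h2 => by
        have := congrArg (fun p => Polynomial.coeff p 0) h2
        simp at this) hr.symm
    rw [Multiset.map_cons, Multiset.prod_cons, roots_mul (mul_ne_zero hfa hft), ih ht,
      Multiset.map_cons]
    have : (1 - C a * X : Polynomial ℂ) = C (-a) * (X - C a⁻¹) := by
      rw [mul_sub, ← C_mul, neg_mul, mul_inv_cancel₀ ha]
      simp only [map_neg, map_one, C_1]
      ring
    rw [this, roots_C_mul _ (neg_ne_zero.mpr ha), roots_X_sub_C]
    rfl

private lemma roots_reverse' (p : Polynomial ℂ) :
    (reverse p).roots = (p.roots.filter (fun z => z ≠ 0)).map (·⁻¹) := by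
  by_cases hp : p = 0
  · simp [hp]
  obtain ⟨t, u, hu, hpu⟩ : ∃ t u, ¬ (X ∣ u) ∧ p = X ^ t * u := by
    obtain ⟨u, hpu, hu⟩ := p.exists_eq_pow_rootMultiplicity_mul_and_not_dvd hp 0
    exact ⟨_, u, by simpa using hu, by simpa using hpu⟩
  have hu0 : u ≠ 0 := fun h => hp (by simp [hpu, h])
  have huc : u.coeff 0 ≠ 0 := fun h => hu (X_dvd_iff.mpr h)
  have hrev : reverse p = reverse u := by rw [hpu, reverse_X_pow_mul]
  have hroots : p.roots = Multiset.replicate t 0 + u.roots := by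
    rw [hpu, roots_mul (hpu ▸ hp), roots_pow, roots_X, Multiset.nsmul_singleton]
  have hunz : ∀ z ∈ u.roots, z ≠ 0 := by
    intro z hz h0
    rw [mem_roots hu0] at hz
    exact huc (by simpa [h0, IsRoot, ← Polynomial.coeff_zero_eq_eval_zero] using hz)
  have hfilter : p.roots.filter (fun z => z ≠ 0) = u.roots := by
    rw [hroots, Multiset.filter_add]
    rw [Multiset.filter_eq_nil.mpr (fun a ha => by
      simp only [Multiset.eq_of_mem_replicate ha]; exact fun h => h rfl)]
    rw [Multiset.filter_eq_self.mpr hunz, zero_add]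
  rw [hrev, hfilter]
  have hcard : u.roots.card = u.natDegree := by
    have := (IsAlgClosed.card_roots_eq_natDegree (p := u)).symm
    simpa using this.symm
  have hfac := C_leadingCoeff_mul_prod_multiset_X_sub_C hcard
  have hlc : u.leadingCoeff ≠ 0 := leadingCoeff_ne_zero.mpr hu0
  have hrevfac : reverse u = C u.leadingCoeff * ((u.roots.map (fun r => 1 - C r * X)).prod) := by
    conv_lhs => rw [← hfac]
    rw [reverse_mul_of_domain, reverse_C]
    congr 1
    have : ∀ (m : Multiset ℂ), reverse ((m.map (fun a => X - C a)).prod)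
        = ((m.map (fun r => 1 - C r * X)).prod) := by
      intro m
      induction m using Multiset.induction_on with
      | empty => simp [reverse]
      | cons a t ih =>
        rw [Multiset.map_cons, Multiset.prod_cons, reverse_mul_of_domain, ih,
          Multiset.map_cons, Multiset.prod_cons]
        congr 1
        have hXa : (X - C a : Polynomial ℂ) = X + C (-a) := by simp [sub_eq_add_neg, map_neg]
        have hX : (X : Polynomial ℂ).reverse = 1 := by
          rw [reverse, natDegree_X]; exact reflect_one_X
        rw [hXa, reverse_add_C, hX, natDegree_X]
        simp only [map_neg, pow_one]
        ring
    exact this u.roots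
  rw [hrevfac, roots_C_mul _ hlc, roots_prod_one_sub' _ (fun h => hunz 0 h rfl)]

private lemma card_filter_lt_roots_reflect' (p : Polynomial ℂ) (hp : p ≠ 0) {N : ℕ}
    (hN : p.natDegree ≤ N) :
    (((reflect N (p.map (starRingEnd ℂ))).roots).filter (fun z => ‖z‖ < 1)).card
      = (N - p.natDegree) + (p.roots.filter (fun z => 1 < ‖z‖)).card := by
  set c := starRingEnd ℂ with hc
  have hinj : Function.Injective c := (starRingEnd ℂ).injective
  have hpc : p.map c ≠ 0 := (Polynomial.map_ne_zero_iff hinj).mpr hp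
  have hdeg : (p.map c).natDegree = p.natDegree := natDegree_map_eq_of_injective hinj p
  have hrootsmap : (p.map c).roots = p.roots.map c :=
    (IsAlgClosed.splits p).roots_map c
  have hrev : reverse (p.map c) ≠ 0 := by
    rw [Ne, reverse_eq_zero]; exact hpc
  rw [reflect_eq_reverse_mul' _ (hdeg ▸ hN), roots_mul (mul_ne_zero hrev (pow_ne_zero _ X_ne_zero)),
    roots_pow, roots_X, Multiset.nsmul_singleton, roots_reverse', hrootsmap, hdeg,
    Multiset.filter_add, Multiset.card_add]
  have h1 : (Multiset.replicate (N - p.natDegree) (0:ℂ)).filter (fun z => ‖z‖ < 1)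
      = Multiset.replicate (N - p.natDegree) 0 := by
    apply Multiset.filter_eq_self.mpr
    intro a ha
    rw [Multiset.eq_of_mem_replicate ha]
    simp
  rw [h1, Multiset.card_replicate, Multiset.filter_map, Multiset.card_map,
    Multiset.filter_filter, Multiset.filter_map, Multiset.card_map]
  rw [add_comm]
  congr 1
  apply congrArg
  apply Multiset.filter_congr
  intro z hz
  simp only [Function.comp]
  constructor
  · rintro ⟨h1, h0⟩
    rw [norm_inv, hc, Complex.norm_conj] at h1
    have hz0 : z ≠ 0 := fun h => h0 (by simp [h])
    rw [inv_lt_one₀ (norm_pos_iff.mpr hz0)] at h1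
    exact h1
  · intro h1
    have hz0 : z ≠ 0 := fun h => by rw [h] at h1; norm_num at h1
    refine ⟨?_, ?_⟩
    · rw [norm_inv, hc, Complex.norm_conj, inv_lt_one₀ (norm_pos_iff.mpr hz0)]
      exact h1
    · simpa using hz0

/-- Root-count identities for `s ± iq` when `ω = s/q` is real on the unit circle:
with `k_{±,1}` (resp. `k_{±,2}`) the number of roots of `s ± iq` strictly inside
(resp. outside) the unit circle and `l_± = deg q − deg(s ± iq)`, one has
`k_{+,1} = l_− + k_{−,2}` and `k_{−,1} = l_+ + k_{+,2}`; consequently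
`k_{+,1} = k_{−,1} ↔ k_{+,1} = l_+ + k_{+,2}`, and `k_{+,1} = k_{−,1}` forces
`deg q` to be even. -/
theorem root_count_identities (s q : Polynomial ℂ)
    (hcop : IsCoprime s q) (hq : q ≠ 0)
    (hqroots : ∀ z : ℂ, q.IsRoot z → ‖z‖ = 1)
    (hreal : ∀ z : ℂ, ‖z‖ = 1 → q.eval z ≠ 0 →
      ∃ t : ℝ, s.eval z / q.eval z = (t : ℂ)) :
    (((s + Polynomial.C Complex.I * q).roots.filter (fun z => ‖z‖ < 1)).card =
        (q.natDegree - (s - Polynomial.C Complex.I * q).natDegree) +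
        ((s - Polynomial.C Complex.I * q).roots.filter (fun z => 1 < ‖z‖)).card) ∧
    (((s - Polynomial.C Complex.I * q).roots.filter (fun z => ‖z‖ < 1)).card =
        (q.natDegree - (s + Polynomial.C Complex.I * q).natDegree) +
        ((s + Polynomial.C Complex.I * q).roots.filter (fun z => 1 < ‖z‖)).card) ∧
    ((((s + Polynomial.C Complex.I * q).roots.filter (fun z => ‖z‖ < 1)).card =
        ((s - Polynomial.C Complex.I * q).roots.filter (fun z => ‖z‖ < 1)).card ↔
      ((s + Polynomial.C Complex.I * q).roots.filter (fun z => ‖z‖ < 1)).card =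
        (q.natDegree - (s + Polynomial.C Complex.I * q).natDegree) +
        ((s + Polynomial.C Complex.I * q).roots.filter (fun z => 1 < ‖z‖)).card)) ∧
    ((((s + Polynomial.C Complex.I * q).roots.filter (fun z => ‖z‖ < 1)).card =
        ((s - Polynomial.C Complex.I * q).roots.filter (fun z => ‖z‖ < 1)).card) →
      Even q.natDegree) := by
  set c := starRingEnd ℂ with hc
  set Pp := s + Polynomial.C Complex.I * q with hPpdef
  set Pm := s - Polynomial.C Complex.I * q with hPmdef
  -- nonvanishing of P±
  have hunit : ∀ a : ℂ, a.im ≠ 0 → s = C a * q → False := by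
    intro a ha hs
    have hcop' := hcop
    rw [hs] at hcop'
    have hu : IsUnit q := hcop'.isUnit_of_dvd' ⟨C a, by ring⟩ dvd_rfl
    have hd : q.degree = 0 := isUnit_iff_degree_eq_zero.mp hu
    have hqC : q = C (q.coeff 0) := eq_C_of_degree_le_zero (le_of_eq hd)
    have hq1 : q.eval 1 ≠ 0 := by
      rw [hqC]; simp only [eval_C]
      intro h; apply hq; rw [hqC, h, map_zero]
    obtain ⟨t, ht⟩ := hreal 1 (by simp) hq1
    rw [hs] at ht
    simp only [eval_mul, eval_C] at ht
    rw [mul_div_assoc, div_self hq1, mul_one] at ht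
    have := congrArg Complex.im ht
    rw [Complex.ofReal_im] at this
    exact ha this
  have hPp0 : Pp ≠ 0 := by
    intro h
    have h' : s + C Complex.I * q = 0 := by rw [← hPpdef]; exact h
    refine hunit (-Complex.I) (by simp) ?_
    rw [map_neg]
    linear_combination h'
  have hPm0 : Pm ≠ 0 := by
    intro h
    have h' : s - C Complex.I * q = 0 := by rw [← hPmdef]; exact h
    refine hunit Complex.I (by simp) ?_
    linear_combination h' 
  -- no roots of P± on circle
  have hnocirc : ∀ z : ℂ, ‖z‖ = 1 → Pp.eval z ≠ 0 ∧ Pm.eval z ≠ 0 := by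
    intro z hz
    by_cases hqz : q.eval z = 0
    · have hsz : s.eval z ≠ 0 := by
        intro hsz
        obtain ⟨a, b, hab⟩ := hcop
        have := congrArg (Polynomial.eval z) hab
        simp [hsz, hqz] at this
      constructor
      · intro h
        rw [hPpdef] at h
        simp only [eval_add, eval_mul, eval_C, hqz, mul_zero, add_zero] at h
        exact hsz h
      · intro h
        rw [hPmdef] at h
        simp only [eval_sub, eval_mul, eval_C, hqz, mul_zero, sub_zero] at h
        exact hsz h
    · obtain ⟨t, ht⟩ := hreal z hz hqz
      have hst : s.eval z = t * q.eval z := by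
        field_simp at ht; linear_combination ht
      constructor <;> intro h
      · rw [hPpdef] at h
        simp only [eval_add, eval_mul, eval_C] at h
        rw [hst] at h
        have : ((t : ℂ) + Complex.I) * q.eval z = 0 := by linear_combination h
        rcases mul_eq_zero.mp this with h2 | h2
        · have := congrArg Complex.im h2
          simp at this
        · exact hqz h2
      · rw [hPmdef] at h
        simp only [eval_sub, eval_mul, eval_C] at h
        rw [hst] at h
        have : ((t : ℂ) - Complex.I) * q.eval z = 0 := by linear_combination h
        rcases mul_eq_zero.mp this with h2 | h2
        · have := congrArg Complex.im h2
          simp at this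
        · exact hqz h2
  -- key reality identity
  have hkey : ∀ z : ℂ, ‖z‖ = 1 →
      s.eval z * c (q.eval z) = c (s.eval z) * q.eval z := by
    intro z hz
    by_cases hqz : q.eval z = 0
    · simp [hqz]
    · obtain ⟨t, ht⟩ := hreal z hz hqz
      have hst : s.eval z = t * q.eval z := by
        field_simp at ht; linear_combination ht
      rw [hst, map_mul, hc, Complex.conj_ofReal]
      ring
  -- degree bookkeeping
  set N := max s.natDegree q.natDegree with hN
  have hsN : s.natDegree ≤ N := le_max_left _ _
  have hqN : q.natDegree ≤ N := le_max_right _ _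
  have hCq : (C Complex.I * q).natDegree = q.natDegree := by
    rw [natDegree_C_mul Complex.I_ne_zero]
  have hPpN : Pp.natDegree ≤ N := by
    rw [hPpdef]
    exact le_trans (natDegree_add_le _ _) (by rw [hCq])
  have hPmN : Pm.natDegree ≤ N := by
    rw [hPmdef]
    exact le_trans (natDegree_sub_le _ _) (by rw [hCq])
  have hinj : Function.Injective c := (starRingEnd ℂ).injective
  have hdegmap : ∀ p : Polynomial ℂ, (p.map c).natDegree = p.natDegree :=
    fun p => natDegree_map_eq_of_injective hinj p
  have hmapne : ∀ p : Polynomial ℂ, p ≠ 0 → p.map c ≠ 0 :=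
    fun p hp => (Polynomial.map_ne_zero_iff hinj).mpr hp
  -- eval of map at conjugate
  have hevalmap : ∀ (p : Polynomial ℂ) (z : ℂ), (p.map c).eval (c z) = c (p.eval z) := by
    intro p z
    rw [eval_map]
    exact eval₂_hom c z
  -- z⁻¹ = conj z on circle
  have hinvconj : ∀ z : ℂ, ‖z‖ = 1 → z⁻¹ = c z := by
    intro z hz
    rw [Complex.inv_def, Complex.normSq_eq_norm_sq, hz]
    simp [hc]
  -- the two main identities
  have hidI : Pp * reflect N (q.map c) = q * reflect N (Pm.map c) := by
    apply poly_eq_of_circle'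
    intro z hz
    have hz0 : z ≠ 0 := by intro h; rw [h] at hz; simp at hz
    rw [eval_mul, eval_mul, eval_reflect' _ (by rw [hdegmap]; exact hqN) hz0,
      eval_reflect' _ (by rw [hdegmap]; exact hPmN) hz0, hinvconj z hz,
      hevalmap, hevalmap]
    have hPmc : c (Pm.eval z) = c (s.eval z) + Complex.I * c (q.eval z) := by
      rw [hPmdef]
      simp only [eval_sub, eval_mul, eval_C, map_sub, map_mul]
      rw [hc, Complex.conj_I]
      ring
    have hPpe : Pp.eval z = s.eval z + Complex.I * q.eval z := by
      rw [hPpdef]; simp [eval_add, eval_mul, eval_C]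
    rw [hPmc, hPpe]
    linear_combination (z ^ N) * hkey z hz
  have hidII : Pm * reflect N (q.map c) = q * reflect N (Pp.map c) := by
    apply poly_eq_of_circle'
    intro z hz
    have hz0 : z ≠ 0 := by intro h; rw [h] at hz; simp at hz
    rw [eval_mul, eval_mul, eval_reflect' _ (by rw [hdegmap]; exact hqN) hz0,
      eval_reflect' _ (by rw [hdegmap]; exact hPpN) hz0, hinvconj z hz,
      hevalmap, hevalmap]
    have hPpc : c (Pp.eval z) = c (s.eval z) - Complex.I * c (q.eval z) := by
      rw [hPpdef]
      simp only [eval_add, eval_mul, eval_C, map_add, map_mul]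
      rw [hc, Complex.conj_I]
      ring
    have hPme : Pm.eval z = s.eval z - Complex.I * q.eval z := by
      rw [hPmdef]; simp [eval_sub, eval_mul, eval_C]
    rw [hPpc, hPme]
    linear_combination (z ^ N) * hkey z hz
  -- nonvanishing of the reflects
  have hQs : reflect N (q.map c) ≠ 0 := by
    rw [Ne, reflect_eq_zero_iff]; exact hmapne q hq
  have hPps : reflect N (Pp.map c) ≠ 0 := by
    rw [Ne, reflect_eq_zero_iff]; exact hmapne Pp hPp0
  have hPms : reflect N (Pm.map c) ≠ 0 := by
    rw [Ne, reflect_eq_zero_iff]; exact hmapne Pm hPm0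
  -- degree of reflect of q map
  have hq0 : q.coeff 0 ≠ 0 := by
    intro h
    have : q.IsRoot 0 := by
      rw [IsRoot, ← Polynomial.coeff_zero_eq_eval_zero]; exact h
    have := hqroots 0 this
    simp at this
  have hQdeg : (reflect N (q.map c)).natDegree = N := by
    rw [reflect_eq_reverse_mul' _ (by rw [hdegmap]; exact hqN),
      natDegree_mul (by rw [Ne, reverse_eq_zero]; exact hmapne q hq) (pow_ne_zero _ X_ne_zero),
      natDegree_X_pow, reverse_natDegree, hdegmap]
    have : (q.map c).natTrailingDegree = 0 := by
      apply natTrailingDegree_eq_zero.mpr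
      right
      rw [coeff_map]
      intro h
      exact hq0 (by simpa using hinj (by simpa using h))
    rw [this]
    omega
  have hPprefN : (reflect N (Pp.map c)).natDegree ≤ N := by
    rw [reflect_eq_reverse_mul' _ (by rw [hdegmap]; exact hPpN)]
    refine le_trans (natDegree_mul_le) ?_
    rw [natDegree_X_pow, hdegmap]
    have := reverse_natDegree_le (Pp.map c)
    rw [hdegmap] at this
    omega
  have hPmrefN : (reflect N (Pm.map c)).natDegree ≤ N := by
    rw [reflect_eq_reverse_mul' _ (by rw [hdegmap]; exact hPmN)]
    refine le_trans (natDegree_mul_le) ?_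
    rw [natDegree_X_pow, hdegmap]
    have := reverse_natDegree_le (Pm.map c)
    rw [hdegmap] at this
    omega
  have hnp : Pp.natDegree ≤ q.natDegree := by
    have := congrArg natDegree hidI
    rw [natDegree_mul hPp0 hQs, natDegree_mul hq hPms, hQdeg] at this
    omega
  have hnm : Pm.natDegree ≤ q.natDegree := by
    have := congrArg natDegree hidII
    rw [natDegree_mul hPm0 hQs, natDegree_mul hq hPps, hQdeg] at this
    omega
  -- root multiset identities
  have hrootsI : Pp.roots + (reflect N (q.map c)).roots
      = q.roots + (reflect N (Pm.map c)).roots := by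
    rw [← roots_mul (mul_ne_zero hPp0 hQs), ← roots_mul (mul_ne_zero hq hPms), hidI]
  have hrootsII : Pm.roots + (reflect N (q.map c)).roots
      = q.roots + (reflect N (Pp.map c)).roots := by
    rw [← roots_mul (mul_ne_zero hPm0 hQs), ← roots_mul (mul_ne_zero hq hPps), hidII]
  -- roots of q contribute nothing off the circle
  have hql : (q.roots.filter (fun z => ‖z‖ < 1)) = 0 := by
    apply Multiset.filter_eq_nil.mpr
    intro z hzr
    rw [hqroots z (isRoot_of_mem_roots hzr)]
    exact lt_irrefl 1
  have hqg : (q.roots.filter (fun z => 1 < ‖z‖)) = 0 := by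
    apply Multiset.filter_eq_nil.mpr
    intro z hzr
    rw [hqroots z (isRoot_of_mem_roots hzr)]
    exact lt_irrefl 1
  -- counting
  have e1 := congrArg (fun m : Multiset ℂ => ((m.filter (fun z => ‖z‖ < 1)).card)) hrootsI
  have e2 := congrArg (fun m : Multiset ℂ => ((m.filter (fun z => ‖z‖ < 1)).card)) hrootsII
  simp only [Multiset.filter_add, Multiset.card_add] at e1 e2
  rw [card_filter_lt_roots_reflect' q hq hqN, card_filter_lt_roots_reflect' Pm hPm0 hPmN,
    hql, hqg] at e1
  rw [card_filter_lt_roots_reflect' q hq hqN, card_filter_lt_roots_reflect' Pp hPp0 hPpN,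
    hql, hqg] at e2
  simp only [Multiset.card_zero, add_zero, zero_add] at e1 e2
  -- totals
  have htot : ∀ p : Polynomial ℂ, p ≠ 0 → (∀ z : ℂ, ‖z‖ = 1 → p.eval z ≠ 0) →
      (p.roots.filter (fun z => ‖z‖ < 1)).card
        + (p.roots.filter (fun z => 1 < ‖z‖)).card = p.natDegree := by
    intro p hp hcircp
    have hcard : p.roots.card = p.natDegree := by
      have := (IsAlgClosed.card_roots_eq_natDegree (p := p)).symm
      simpa using this.symm
    rw [← hcard]
    conv_rhs => rw [← Multiset.filter_add_not (fun z => ‖z‖ < 1) p.roots,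
      Multiset.card_add]
    congr 1
    apply congrArg
    apply Multiset.filter_congr
    intro z hz
    have habs : ‖z‖ ≠ 1 := by
      intro h
      exact hcircp z h ((mem_roots hp).mp hz)
    constructor
    · intro h h2
      exact lt_irrefl _ (h2.trans h)
    · intro h
      exact lt_of_le_of_ne (not_lt.mp h) (Ne.symm habs)
  have tp := htot Pp hPp0 (fun z hz => (hnocirc z hz).1)
  have tm := htot Pm hPm0 (fun z hz => (hnocirc z hz).2)
  refine ⟨by omega, by omega, by omega, fun h =>
    ⟨Multiset.card (Multiset.filter (fun z => ‖z‖ < 1) Pp.roots), by omega⟩⟩
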